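/- The number of tangent hyperplanes h_π that are active at w (i.e., h_π(w) = R(w)) equals the number of permutations sorting w, which is the product of the factorials of the multiplicities of the distinct values of w; in particular, h_π(w) = R(w) if and only if π sorts w (w_{π(1)} ≤ … ≤ w_{π(d)}). -/

import Mathlib

noncomputable def R (d : ℕ) (w : Fin d → ℝ) : ℝ :=
  (1 / ((d : ℝ) - 1)) * ∑ i : Fin d, ∑ j : Fin d, if j < i then |w i - w j| else 0

noncomputable def h (d : ℕ) (π : Equiv.Perm (Fin d)) (w : Fin d → ℝ) : ℝ :=
  (1 / ((d : ℝ) - 1)) * ∑ i : Fin d, (2 * ((i : ℕ) : ℝ) + 1 - (d : ℝ)) * w (π i)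

open Finset

private lemma key_two_mul {d : ℕ} (g : Fin d → ℝ) :
    2 * (∑ i : Fin d, ∑ j : Fin d, (if j < i then |g i - g j| else 0))
      = ∑ i : Fin d, ∑ j : Fin d, |g i - g j| := by
  have hswap : (∑ i : Fin d, ∑ j : Fin d, (if j < i then |g i - g j| else 0))
      = ∑ i : Fin d, ∑ j : Fin d, (if i < j then |g i - g j| else 0) := by
    rw [Finset.sum_comm]
    refine Finset.sum_congr rfl fun i _ => Finset.sum_congr rfl fun j _ => ?_
    rw [abs_sub_comm]
  calc 2 * (∑ i : Fin d, ∑ j : Fin d, (if j < i then |g i - g j| else 0))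
      = (∑ i : Fin d, ∑ j : Fin d, (if j < i then |g i - g j| else 0))
        + ∑ i : Fin d, ∑ j : Fin d, (if i < j then |g i - g j| else 0) := by
        rw [← hswap]; ring
    _ = ∑ i : Fin d, ∑ j : Fin d,
          ((if j < i then |g i - g j| else 0) + (if i < j then |g i - g j| else 0)) := by
        rw [← Finset.sum_add_distrib]
        exact Finset.sum_congr rfl fun i _ => (Finset.sum_add_distrib).symm
    _ = ∑ i : Fin d, ∑ j : Fin d, |g i - g j| := by
        refine Finset.sum_congr rfl fun i _ => Finset.sum_congr rfl fun j _ => ?_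
        rcases lt_trichotomy j i with hj | hj | hj
        · rw [if_pos hj, if_neg hj.asymm, add_zero]
        · subst hj; simp
        · rw [if_neg hj.asymm, if_pos hj, zero_add]

private lemma sumA_perm {d : ℕ} (f : Fin d → ℝ) (π : Equiv.Perm (Fin d)) :
    ∑ i : Fin d, ∑ j : Fin d, (if j < i then |f (π i) - f (π j)| else 0)
      = ∑ i : Fin d, ∑ j : Fin d, (if j < i then |f i - f j| else 0) := by
  have hT : ∑ i : Fin d, ∑ j : Fin d, |f (π i) - f (π j)|
      = ∑ i : Fin d, ∑ j : Fin d, |f i - f j| := by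
    rw [← Equiv.sum_comp π (fun i => ∑ j : Fin d, |f i - f j|)]
    exact Finset.sum_congr rfl fun i _ => (Equiv.sum_comp π fun j => |f (π i) - f j|)
  have h1 := key_two_mul (fun i => f (π i))
  have h2 := key_two_mul f
  apply mul_left_cancel₀ (two_ne_zero (α := ℝ))
  rw [h2]
  rw [← hT]
  exact h1

private lemma sumB {d : ℕ} (u : Fin d → ℝ) :
    ∑ i : Fin d, (2 * ((i : ℕ) : ℝ) + 1 - (d : ℝ)) * u i
      = ∑ i : Fin d, ∑ j : Fin d, (if j < i then (u i - u j) else 0) := by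
  have h1 : ∀ i : Fin d, ∑ j : Fin d, (if j < i then u i else 0) = ((i : ℕ) : ℝ) * u i := by
    intro i
    rw [← Finset.sum_filter, Finset.sum_const, nsmul_eq_mul]
    congr 1
    have : Finset.univ.filter (fun j : Fin d => j < i) = Finset.Iio i := by
      ext j; simp
    rw [this, Fin.card_Iio]
  have h2 : ∀ j : Fin d, ∑ i : Fin d, (if j < i then u j else 0)
      = ((d : ℝ) - 1 - ((j : ℕ) : ℝ)) * u j := by
    intro j
    rw [← Finset.sum_filter, Finset.sum_const, nsmul_eq_mul]
    have he : Finset.univ.filter (fun i : Fin d => j < i) = Finset.Ioi j := by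
      ext i; simp
    rw [he, Fin.card_Ioi]
    congr 1
    have hj : (j : ℕ) ≤ d - 1 := Nat.le_sub_one_of_lt j.isLt
    rw [Nat.cast_sub hj, Nat.cast_sub j.pos]
    norm_num
  have split : ∀ (i j : Fin d), (if j < i then (u i - u j) else 0)
      = (if j < i then u i else 0) - (if j < i then u j else 0) := by
    intro i j; split <;> simp
  have e0 : ∑ i : Fin d, ∑ j : Fin d, (if j < i then (u i - u j) else 0)
      = (∑ i : Fin d, ∑ j : Fin d, (if j < i then u i else 0))
        - ∑ i : Fin d, ∑ j : Fin d, (if j < i then u j else 0) := by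
    simp_rw [split]
    rw [← Finset.sum_sub_distrib]
    exact Finset.sum_congr rfl fun i _ => Finset.sum_sub_distrib _ _
  have e1 : ∑ i : Fin d, ∑ j : Fin d, (if j < i then u i else 0)
      = ∑ i : Fin d, ((i : ℕ) : ℝ) * u i :=
    Finset.sum_congr rfl fun i _ => h1 i
  have e2 : ∑ i : Fin d, ∑ j : Fin d, (if j < i then u j else 0)
      = ∑ j : Fin d, ((d : ℝ) - 1 - ((j : ℕ) : ℝ)) * u j := by
    rw [Finset.sum_comm]
    exact Finset.sum_congr rfl fun j _ => h2 j
  rw [e0, e1, e2, ← Finset.sum_sub_distrib]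
  exact Finset.sum_congr rfl fun i _ => by ring

private lemma key_iff {d : ℕ} (hd : 2 ≤ d) (w : Fin d → ℝ) (π : Equiv.Perm (Fin d)) :
    h d π w = R d w ↔ Monotone (w ∘ π) := by
  have hc : (0 : ℝ) < (d : ℝ) - 1 := by
    have : (2 : ℝ) ≤ (d : ℝ) := by exact_mod_cast hd
    linarith
  set A := ∑ i : Fin d, ∑ j : Fin d, (if j < i then |w (π i) - w (π j)| else 0) with hA
  set B := ∑ i : Fin d, ∑ j : Fin d, (if j < i then (w (π i) - w (π j)) else 0) with hB
  have hR : R d w = (1 / ((d : ℝ) - 1)) * A := by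
    rw [R, ← sumA_perm w π]
  have hh : h d π w = (1 / ((d : ℝ) - 1)) * B := by
    rw [h]; congr 1; exact sumB (fun i => w (π i))
  have hle : ∀ p ∈ (Finset.univ ×ˢ Finset.univ : Finset (Fin d × Fin d)),
      (if p.2 < p.1 then (w (π p.1) - w (π p.2)) else 0)
        ≤ (if p.2 < p.1 then |w (π p.1) - w (π p.2)| else 0) := by
    intro p _
    split
    · exact le_abs_self _
    · exact le_refl 0
  have hBA : B = A ↔ ∀ j i : Fin d, j < i → w (π j) ≤ w (π i) := by
    rw [hB, hA, ← Finset.sum_product', ← Finset.sum_product',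
      Finset.sum_eq_sum_iff_of_le hle]
    constructor
    · intro H j i hji
      have hh := H (i, j) (by simp)
      rw [if_pos hji, if_pos hji] at hh
      have h0 : 0 ≤ w (π i) - w (π j) := by rw [hh]; exact abs_nonneg _
      linarith
    · intro H p _
      by_cases hp : p.2 < p.1
      · rw [if_pos hp, if_pos hp, abs_of_nonneg (by have := H _ _ hp; linarith)]
      · rw [if_neg hp, if_neg hp]
  have hmono : Monotone (w ∘ π) ↔ ∀ j i : Fin d, j < i → w (π j) ≤ w (π i) := by
    rw [monotone_iff_forall_lt]
    exact ⟨fun H j i hji => H hji, fun H a b hab => H a b hab⟩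
  rw [hh, hR, mul_right_inj' (one_div_ne_zero (ne_of_gt hc)), hBA, hmono]

open scoped Classical in
private lemma card_stab {d : ℕ} (f : Fin d → ℝ) :
    (Finset.univ.filter (fun τ : Equiv.Perm (Fin d) => f ∘ τ = f)).card
      = ∏ v ∈ Finset.univ.image f,
          Nat.factorial (Finset.univ.filter (fun i => f i = v)).card := by
  classical
  set s : Finset ℝ := Finset.univ.image f with hs
  let f' : Fin d → {v // v ∈ s} := fun i => ⟨f i, Finset.mem_image_of_mem f (Finset.mem_univ i)⟩
  let e0 : (Σ v : {v // v ∈ s}, {i // f' i = v}) ≃ Fin d := Equiv.sigmaFiberEquiv f'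
  let Φ : (∀ v : {v // v ∈ s}, Equiv.Perm {i // f' i = v}) → Equiv.Perm (Fin d) :=
    fun g => e0.permCongr (Equiv.sigmaCongrRight g)
  have hΦapp : ∀ g i, Φ g i = ((g (f' i)) ⟨i, rfl⟩).1 := fun g i => rfl
  have hs_inj : Function.Injective
      (fun g : (∀ v : {v // v ∈ s}, Equiv.Perm {i // f' i = v}) =>
        Equiv.sigmaCongrRight g) := by
    intro g g' hgg
    funext v
    ext x
    have hx := congrArg (fun σ => σ ⟨v, x⟩) hgg
    have hx2 : (g v) x = (g' v) x := by simpa using hx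
    rw [hx2]
  have hΦinj : Function.Injective Φ := (e0.permCongr).injective.comp hs_inj
  have himage : Finset.univ.filter (fun τ : Equiv.Perm (Fin d) => f ∘ τ = f)
      = Finset.univ.image Φ := by
    ext τ
    simp only [Finset.mem_filter, Finset.mem_image, Finset.mem_univ, true_and]
    constructor
    · intro hτ
      have hfib : ∀ (v : {v // v ∈ s}) (i : Fin d), f' i = v ↔ f' (τ i) = v := by
        intro v i
        have e : f' (τ i) = f' i := Subtype.ext (congrFun hτ i)
        rw [e]
      refine ⟨fun v => Equiv.Perm.subtypePerm τ (fun i => (hfib v i).symm), ?_⟩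
      ext i
      rfl
    · rintro ⟨g, rfl⟩
      funext i
      exact congrArg Subtype.val ((g (f' i) ⟨i, rfl⟩).2)
  have hfibcard : ∀ v : {v // v ∈ s}, Fintype.card {i // f' i = v}
      = (Finset.univ.filter (fun i => f i = v.1)).card := by
    intro v
    rw [Fintype.card_subtype]
    congr 1
    ext i
    simp [f', Subtype.ext_iff]
  rw [himage, Finset.card_image_of_injective _ hΦinj, Finset.card_univ, Fintype.card_pi]
  rw [← Finset.prod_coe_sort s
    (fun v => Nat.factorial (Finset.univ.filter (fun i => f i = v)).card)]
  exact Finset.prod_congr rfl fun v _ => by rw [Fintype.card_perm, hfibcard]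

open scoped Classical in
theorem stmt19 {d : ℕ} (hd : 2 ≤ d) (w : Fin d → ℝ) :
    ((Finset.univ.filter (fun π : Equiv.Perm (Fin d) => h d π w = R d w)).card =
      ∏ v ∈ Finset.univ.image w,
        Nat.factorial (Finset.univ.filter (fun i => w i = v)).card) ∧
    (∀ π : Equiv.Perm (Fin d), h d π w = R d w ↔ Monotone (w ∘ π)) := by
  refine ⟨?_, fun π => key_iff hd w π⟩
  set σ0 := Tuple.sort w with hσ0
  have h1 : Finset.univ.filter (fun π : Equiv.Perm (Fin d) => h d π w = R d w)
      = Finset.univ.filter (fun π : Equiv.Perm (Fin d) => w ∘ π = w ∘ σ0) := by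
    ext π
    simp only [Finset.mem_filter, Finset.mem_univ, true_and]
    rw [key_iff hd w π, ← Tuple.comp_sort_eq_comp_iff_monotone]
  have h2 : (Finset.univ.filter (fun π : Equiv.Perm (Fin d) => w ∘ π = w ∘ σ0)).card
      = (Finset.univ.filter (fun τ : Equiv.Perm (Fin d) => (w ∘ σ0) ∘ τ = w ∘ σ0)).card := by
    refine Finset.card_bij' (fun π _ => σ0⁻¹ * π) (fun τ _ => σ0 * τ) ?_ ?_ ?_ ?_
    · intro π hπ
      simp only [Finset.mem_filter, Finset.mem_univ, true_and] at hπ ⊢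
      funext x
      simp only [Function.comp_apply, Equiv.Perm.mul_apply, Equiv.Perm.inv_def, Equiv.apply_symm_apply]
      exact congrFun hπ x
    · intro τ hτ
      simp only [Finset.mem_filter, Finset.mem_univ, true_and] at hτ ⊢
      funext x
      have := congrFun hτ x
      simpa using this
    · intro π _; simp [mul_assoc]
    · intro τ _; simp [← mul_assoc]
  have himg : Finset.univ.image (w ∘ σ0) = Finset.univ.image w := by
    rw [← Finset.image_image, Finset.image_univ_of_surjective σ0.surjective]
  have hfib : ∀ v : ℝ, (Finset.univ.filter (fun i => (w ∘ σ0) i = v)).card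
      = (Finset.univ.filter (fun i => w i = v)).card := by
    intro v
    refine Finset.card_bij' (fun i _ => σ0 i) (fun i _ => σ0⁻¹ i) ?_ ?_ ?_ ?_ <;>
      intro i hi <;>
      simp only [Finset.mem_filter, Finset.mem_univ, true_and, Function.comp_apply] at hi ⊢ <;>
      simp [hi]
  rw [h1, h2, card_stab (w ∘ σ0), himg]
  exact Finset.prod_congr rfl fun v _ => by rw [hfib v]
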